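/- With unit activation costs, every optimal assignment s* has the property that each occupied slot contains at least one job whose window contains no other occupied slot of s*; consequently there is a payment vector ξ (charging that job 1 on its slot and everyone else 0) making (s*, ξ) a Nash equilibrium of the coordination mechanism. -/

import Mathlib

/-- Number of jobs declaring slot `t`. -/
def load {n : ℕ} (s : Fin n → ℤ) (t : ℤ) : ℕ :=
  (Finset.univ.filter fun j => s j = t).card

/-- Total declared payment on slot `t`. -/
def pay {n : ℕ} (s : Fin n → ℤ) (ξ : Fin n → ℝ) (t : ℤ) : ℝ :=
  ∑ j ∈ Finset.univ.filter (fun j => s j = t), ξ j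

/-- Unit activation cost: `c 0 = 0` and `c l = 1` for `l ≥ 1`. -/
def unitCost (l : ℕ) : ℝ := if l = 0 then 0 else 1

/-- Total cost of an assignment with unit activation costs: the number of
occupied slots. -/
def occupied {n : ℕ} (s : Fin n → ℤ) : ℕ := (Finset.univ.image s).card

theorem optimal_supports_ne {n : ℕ}
    (r e : Fin n → ℤ) (sstar : Fin n → ℤ)
    (hstarwin : ∀ j, sstar j ∈ Finset.Icc (r j) (e j))
    (hstaropt : ∀ s' : Fin n → ℤ, (∀ j, s' j ∈ Finset.Icc (r j) (e j)) →
      occupied sstar ≤ occupied s') :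
    (∀ t ∈ Finset.univ.image sstar, ∃ j : Fin n, sstar j = t ∧
      ∀ t' ∈ Finset.Icc (r j) (e j), t' ≠ t → t' ∉ Finset.univ.image sstar) ∧
    ∃ ξ : Fin n → ℝ, (∀ j, 0 ≤ ξ j) ∧
      (∀ j, unitCost (load sstar (sstar j)) ≤ pay sstar ξ (sstar j)) ∧
      (∀ j, ∀ t ∈ Finset.Icc (r j) (e j), t ≠ sstar j →
        ξ j ≤ max 0 (unitCost (load sstar t + 1) - pay sstar ξ t)) ∧
      (∀ j, ξ j ≤ max 0 (unitCost (load sstar (sstar j))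
        - (pay sstar ξ (sstar j) - ξ j))) := by
  classical
  have hpart1 : ∀ t ∈ Finset.univ.image sstar, ∃ j : Fin n, sstar j = t ∧
      ∀ t' ∈ Finset.Icc (r j) (e j), t' ≠ t → t' ∉ Finset.univ.image sstar := by
    intro t ht
    by_contra hcon
    push_neg at hcon
    choose f hf1 hf2 hf3 using hcon
    set s' : Fin n → ℤ := fun j => if hj : sstar j = t then f j hj else sstar j with hs'
    have hwin' : ∀ j, s' j ∈ Finset.Icc (r j) (e j) := by
      intro j
      by_cases hj : sstar j = t
      · simp only [hs', dif_pos hj]; exact hf1 j hj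
      · simp only [hs', dif_neg hj]; exact hstarwin j
    have hsub : Finset.univ.image s' ⊆ (Finset.univ.image sstar).erase t := by
      intro x hx
      simp only [Finset.mem_image, Finset.mem_univ, true_and] at hx
      obtain ⟨j, hj⟩ := hx
      rw [Finset.mem_erase]
      subst hj
      by_cases hjt : sstar j = t
      · simp only [hs', dif_pos hjt]
        exact ⟨hf2 j hjt, hf3 j hjt⟩
      · simp only [hs', dif_neg hjt]
        exact ⟨hjt, Finset.mem_image_of_mem sstar (Finset.mem_univ j)⟩
    have hlt : occupied s' < occupied sstar := by
      calc occupied s' ≤ ((Finset.univ.image sstar).erase t).card :=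
            Finset.card_le_card hsub
        _ < occupied sstar := Finset.card_erase_lt_of_mem ht
    exact absurd (hstaropt s' hwin') (not_le.mpr hlt)
  refine ⟨hpart1, ?_⟩
  rcases Nat.eq_zero_or_pos n with hn | hn
  · subst hn
    exact ⟨fun _ => 0, fun j => j.elim0, fun j => j.elim0, fun j => j.elim0, fun j => j.elim0⟩
  haveI : NeZero n := ⟨hn.ne'⟩
  set W : ℤ → Fin n := fun t =>
    if ht : t ∈ Finset.univ.image sstar then (hpart1 t ht).choose else 0 with hWdef
  have hW1 : ∀ t (ht : t ∈ Finset.univ.image sstar), sstar (W t) = t := by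
    intro t ht
    simp only [hWdef, dif_pos ht]
    exact (hpart1 t ht).choose_spec.1
  have hW2 : ∀ t (ht : t ∈ Finset.univ.image sstar),
      ∀ t' ∈ Finset.Icc (r (W t)) (e (W t)), t' ≠ t → t' ∉ Finset.univ.image sstar := by
    intro t ht
    simp only [hWdef, dif_pos ht]
    exact (hpart1 t ht).choose_spec.2
  set ξ : Fin n → ℝ := fun j => if j = W (sstar j) then 1 else 0 with hξdef
  have hmem : ∀ j : Fin n, sstar j ∈ Finset.univ.image sstar :=
    fun j => Finset.mem_image_of_mem _ (Finset.mem_univ j)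
  have hξnn : ∀ j, 0 ≤ ξ j := by
    intro j; simp only [hξdef]; split <;> norm_num
  have hpay : ∀ j, pay sstar ξ (sstar j) = 1 := by
    intro j
    unfold pay
    have hcongr : ∀ k ∈ Finset.univ.filter (fun k => sstar k = sstar j),
        ξ k = if k = W (sstar j) then 1 else 0 := by
      intro k hk
      simp only [Finset.mem_filter] at hk
      simp only [hξdef, hk.2]
    rw [Finset.sum_congr rfl hcongr, Finset.sum_ite_eq' _ (W (sstar j)) (fun _ => (1:ℝ))]
    rw [if_pos]
    simp only [Finset.mem_filter, Finset.mem_univ, true_and]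
    exact hW1 _ (hmem j)
  have hpay0 : ∀ t : ℤ, t ∉ Finset.univ.image sstar → pay sstar ξ t = 0 := by
    intro t ht
    unfold pay
    apply Finset.sum_eq_zero
    intro k hk
    simp only [Finset.mem_filter] at hk
    exact absurd (hk.2 ▸ hmem k) ht
  have hload0 : ∀ t : ℤ, t ∉ Finset.univ.image sstar → load sstar t = 0 := by
    intro t ht
    unfold load
    rw [Finset.card_eq_zero, Finset.filter_eq_empty_iff]
    intro k _ hk
    exact ht (hk ▸ hmem k)
  have hloadpos : ∀ j, load sstar (sstar j) ≠ 0 := by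
    intro j
    unfold load
    exact Finset.card_ne_zero_of_mem (Finset.mem_filter.mpr ⟨Finset.mem_univ j, rfl⟩)
  refine ⟨ξ, hξnn, ?_, ?_, ?_⟩
  · intro j
    rw [hpay j]
    unfold unitCost
    split <;> norm_num
  · intro j t ht htne
    by_cases hj : j = W (sstar j)
    · have hnot : t ∉ Finset.univ.image sstar := by
        apply hW2 (sstar j) (hmem j) t _ htne
        rw [← hj]; exact ht
      have h1 : unitCost (load sstar t + 1) = 1 := by
        rw [hload0 t hnot]; simp [unitCost]
      rw [h1, hpay0 t hnot]
      simp only [hξdef, if_pos hj]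
      norm_num
    · simp only [hξdef, if_neg hj]
      exact le_max_left 0 _
  · intro j
    by_cases hj : j = W (sstar j)
    · have h1 : unitCost (load sstar (sstar j)) = 1 := by
        simp [unitCost, hloadpos j]
      rw [h1, hpay j]
      simp only [hξdef, if_pos hj]
      norm_num
    · simp only [hξdef, if_neg hj]
      exact le_max_left 0 _
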